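/- Let p be a prime and A an abelian group admitting a uniform bound M with |A/nA| ≤ M for all n coprime to p. Write A ≅ F ⊕ D with F finite of order coprime to p and D p'-divisible. Then F may be chosen so that |F| ≤ M, and for every n coprime to p divisible by the exponent of F one has A/nA ≅ F. -/

import Mathlib

/-- The additive homomorphism `a ↦ n • a` on an abelian group. -/
def nMul (A : Type*) [AddCommGroup A] (n : ℕ) : A →+ A :=
  AddMonoidHom.mk' (fun a => n • a) (fun a b => smul_add n a b)

/-- The subgroup of elements of finite order coprime to `p` ("p'-torsion"). -/
def pPrimeTorsion (A : Type*) [AddCommGroup A] (p : ℕ) : AddSubgroup A where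
  carrier := {a : A | ∃ n : ℕ, 0 < n ∧ Nat.Coprime n p ∧ n • a = 0}
  zero_mem' := ⟨1, Nat.one_pos, Nat.coprime_one_left p, smul_zero 1⟩
  add_mem' := by
    rintro a b ⟨n, hn, hcn, ha⟩ ⟨m, hm, hcm, hb⟩
    refine ⟨n * m, Nat.mul_pos hn hm, Nat.Coprime.mul hcn hcm, ?_⟩
    have h1 : (n * m) • a = 0 := by rw [mul_comm, mul_smul, ha, smul_zero]
    have h2 : (n * m) • b = 0 := by rw [mul_smul, hb, smul_zero]
    rw [smul_add, h1, h2, add_zero]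
  neg_mem' := by
    rintro a ⟨n, hn, hcn, ha⟩
    exact ⟨n, hn, hcn, by rw [smul_neg, ha, neg_zero]⟩

lemma nMul_apply {A : Type*} [AddCommGroup A] (n : ℕ) (a : A) : nMul A n a = n • a := rfl

/-- If `|A/nA| ≤ M` uniformly for `n` coprime to `p`, then in a decomposition
`A = F ⊕ D` with `F` finite of order coprime to `p` and `D` p'-divisible, `F` may be
chosen with `|F| ≤ M`, and `A/nA ≅ F` whenever the exponent of `F` divides `n`
(with `n` coprime to `p`). -/
theorem stmt19 (p M : ℕ) (hp : p.Prime) (A : Type*) [AddCommGroup A]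
    (hbd : ∀ n : ℕ, 0 < n → Nat.Coprime n p →
      Finite (A ⧸ (nMul A n).range) ∧ Nat.card (A ⧸ (nMul A n).range) ≤ M) :
    ∃ F D : AddSubgroup A, IsCompl F D ∧ Finite F ∧ (Nat.card F).Coprime p ∧
      Nat.card F ≤ M ∧
      (∀ n : ℕ, 0 < n → Nat.Coprime n p → ∀ d ∈ D, ∃ e ∈ D, n • e = d) ∧
      ∀ n : ℕ, 0 < n → Nat.Coprime n p → AddMonoid.exponent F ∣ n →
        Nonempty ((A ⧸ (nMul A n).range) ≃+ F) := by
  classical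
  -- the set of achievable cardinalities of quotients, and a maximizer n₀
  set S : Set ℕ :=
    {k | ∃ n : ℕ, 0 < n ∧ Nat.Coprime n p ∧ Nat.card (A ⧸ (nMul A n).range) = k} with hSdef
  have hSne : S.Nonempty := ⟨_, 1, one_pos, Nat.coprime_one_left p, rfl⟩
  have hSbdd : BddAbove S := ⟨M, by rintro k ⟨n, hn, hcn, rfl⟩; exact (hbd n hn hcn).2⟩
  obtain ⟨n₀, hn₀pos, hn₀cop, hn₀card⟩ := Nat.sSup_mem hSne hSbdd
  set D : AddSubgroup A := (nMul A n₀).range with hDdef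
  have hfinD : Finite (A ⧸ D) := (hbd n₀ hn₀pos hn₀cop).1
  -- key: `n₀ A = (n * n₀) A` for any `n` coprime to `p`
  have key : ∀ n : ℕ, 0 < n → Nat.Coprime n p → (nMul A (n * n₀)).range = D := by
    intro n hn hcn
    have hpos : 0 < n * n₀ := Nat.mul_pos hn hn₀pos
    have hcop : Nat.Coprime (n * n₀) p := hcn.mul hn₀cop
    have hle : (nMul A (n * n₀)).range ≤ D := by
      rintro _ ⟨a, rfl⟩
      exact ⟨n • a, by rw [nMul_apply, nMul_apply, ← mul_smul, mul_comm]⟩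
    have hf1 : Finite (A ⧸ (nMul A (n * n₀)).range) := (hbd _ hpos hcop).1
    have hle' : (nMul A (n * n₀)).range ≤ D.comap (AddMonoidHom.id A) := hle
    let q : A ⧸ (nMul A (n * n₀)).range →+ A ⧸ D :=
      QuotientAddGroup.map _ _ (AddMonoidHom.id A) hle'
    have hqsurj : Function.Surjective q := by
      intro x
      obtain ⟨a, rfl⟩ := QuotientAddGroup.mk_surjective x
      exact ⟨QuotientAddGroup.mk a, rfl⟩
    have hcard1 : Nat.card (A ⧸ (nMul A (n * n₀)).range) ≤ Nat.card (A ⧸ D) := by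
      rw [hn₀card]
      exact le_csSup hSbdd ⟨n * n₀, hpos, hcop, rfl⟩
    have hbij : Function.Bijective q := hqsurj.bijective_of_nat_card_le hcard1
    refine le_antisymm hle fun x hx => ?_
    have h0 : q (QuotientAddGroup.mk x) = 0 := by
      have : q (QuotientAddGroup.mk x) = QuotientAddGroup.mk x := rfl
      rw [this]
      exact (QuotientAddGroup.eq_zero_iff x).mpr hx
    have : QuotientAddGroup.mk x = (0 : A ⧸ (nMul A (n * n₀)).range) := by
      apply hbij.1
      rw [h0, map_zero]
    exact (QuotientAddGroup.eq_zero_iff x).mp this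
  -- D is p'-divisible
  have hdiv : ∀ n : ℕ, 0 < n → Nat.Coprime n p → ∀ d ∈ D, ∃ e ∈ D, n • e = d := by
    intro n hn hcn d hd
    rw [← key n hn hcn] at hd
    obtain ⟨a, rfl⟩ := hd
    exact ⟨n₀ • a, ⟨a, rfl⟩, by rw [nMul_apply, ← mul_smul]⟩
  -- the quotient A/D is killed by n₀
  have hkill : ∀ x : A ⧸ D, n₀ • x = 0 := by
    intro x
    obtain ⟨a, rfl⟩ := QuotientAddGroup.mk_surjective x
    have : ((n₀ • a : A) : A ⧸ D) = n₀ • (a : A ⧸ D) :=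
      AddMonoidHom.map_nsmul (QuotientAddGroup.mk' D) n₀ a
    rw [← this]
    exact (QuotientAddGroup.eq_zero_iff _).mpr ⟨a, rfl⟩
  -- lifting elements of A/D killed by m to elements of A killed by m
  have hlift : ∀ (m : ℕ) (g : A ⧸ D), 0 < m → Nat.Coprime m p → m • g = 0 →
      ∃ f : A, QuotientAddGroup.mk f = g ∧ m • f = 0 := by
    intro m g hm hcm hg
    obtain ⟨a, rfl⟩ := QuotientAddGroup.mk_surjective g
    have hma : m • a ∈ D := by
      have : ((m • a : A) : A ⧸ D) = m • (a : A ⧸ D) :=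
        AddMonoidHom.map_nsmul (QuotientAddGroup.mk' D) m a
      have h0 : ((m • a : A) : A ⧸ D) = 0 := by rw [this, hg]
      exact (QuotientAddGroup.eq_zero_iff _).mp h0
    obtain ⟨e, he, hee⟩ := hdiv m hm hcm (m • a) hma
    refine ⟨a - e, ?_, by rw [smul_sub, hee, sub_self]⟩
    refine QuotientAddGroup.eq.mpr ?_
    have h' : -(a - e) + a = e := by abel
    rw [h']
    exact he
  -- structure theorem for the finite abelian group A/D
  obtain ⟨ι, hι, m, hm1, ⟨Q⟩⟩ := AddCommGroup.equiv_directSum_zmod_of_finite' (A ⧸ D)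
  set g : ι → A ⧸ D := fun i => Q.symm (DirectSum.of (fun i => ZMod (m i)) i 1) with hgdef
  have hord : ∀ i, addOrderOf (g i) = m i := by
    intro i
    have h1 : addOrderOf (g i) = addOrderOf (DirectSum.of (fun i => ZMod (m i)) i 1) :=
      addOrderOf_injective Q.symm.toAddMonoidHom Q.symm.injective _
    have h2 : addOrderOf (DirectSum.of (fun i => ZMod (m i)) i 1)
        = addOrderOf (1 : ZMod (m i)) :=
      addOrderOf_injective (DirectSum.of (fun i => ZMod (m i)) i) (DirectSum.of_injective i) 1
    rw [h1, h2, ZMod.addOrderOf_one]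
  have hmdvd : ∀ i, m i ∣ n₀ := by
    intro i
    rw [← hord i]
    exact addOrderOf_dvd_of_nsmul_eq_zero (hkill (g i))
  have hmpos : ∀ i, 0 < m i := fun i => lt_trans one_pos (hm1 i)
  have hmcop : ∀ i, Nat.Coprime (m i) p := fun i =>
    Nat.Coprime.coprime_dvd_left (hmdvd i) hn₀cop
  have hgkill : ∀ i, m i • g i = 0 := by
    intro i
    rw [← hord i]
    exact addOrderOf_nsmul_eq_zero (g i)
  choose f hf1 hf2 using fun i => hlift (m i) (g i) (hmpos i) (hmcop i) (hgkill i)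
  -- the homomorphism from the direct sum to A
  have hφcond : ∀ i, (zmultiplesHom A (f i)) ((m i : ℤ)) = 0 := by
    intro i
    simp only [zmultiplesHom_apply, natCast_zsmul]
    exact hf2 i
  let φ : (DirectSum ι fun i => ZMod (m i)) →+ A :=
    DirectSum.toAddMonoid fun i => ZMod.lift (m i) ⟨zmultiplesHom A (f i), hφcond i⟩
  set π : A →+ A ⧸ D := QuotientAddGroup.mk' D with hπdef
  have hπφ : ∀ x, π (φ x) = Q.symm x := by
    have hext : π.comp φ = AddMonoidHom.comp Q.symm.toAddMonoidHom (AddMonoidHom.id _) := by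
      apply DirectSum.addHom_ext
      intro i y
      obtain ⟨k, rfl⟩ := ZMod.intCast_surjective y
      simp only [AddMonoidHom.comp_apply, AddMonoidHom.id_apply]
      have h1 : φ (DirectSum.of (fun i => ZMod (m i)) i ((k : ℤ) : ZMod (m i))) = k • f i := by
        show (DirectSum.toAddMonoid _) (DirectSum.of (fun i => ZMod (m i)) i _) = _
        rw [DirectSum.toAddMonoid_of, ZMod.lift_coe]
        rfl
      have h2 : Q.symm.toAddMonoidHom (DirectSum.of (fun i => ZMod (m i)) i ((k : ℤ) : ZMod (m i)))
          = k • g i := by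
        have : ((k : ℤ) : ZMod (m i)) = k • (1 : ZMod (m i)) := by rw [zsmul_one]
        rw [this, map_zsmul, map_zsmul]
        rfl
      rw [h1, h2, map_zsmul, QuotientAddGroup.mk'_apply, hf1 i]
    intro x
    have := congrArg (fun h => h x) (congrArg DFunLike.coe hext)
    simpa using this
  -- F is the image of φ
  set F : AddSubgroup A := φ.range with hFdef
  have hFmem0 : ∀ a ∈ F, a ∈ D → a = 0 := by
    intro a ha hmem
    obtain ⟨x, rfl⟩ := AddMonoidHom.mem_range.mp ha
    have h0 : Q.symm x = 0 := by
      rw [← hπφ]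
      exact (QuotientAddGroup.eq_zero_iff _).mpr hmem
    have : x = 0 := Q.symm.injective (by rw [h0, map_zero])
    rw [this, map_zero]
  have hsup : ∀ a : A, ∃ x, a - φ x ∈ D := by
    intro a
    refine ⟨Q (π a), ?_⟩
    have h1 : π (φ (Q (π a))) = π a := by rw [hπφ, AddEquiv.symm_apply_apply]
    have : π (a - φ (Q (π a))) = 0 := by rw [map_sub, h1, sub_self]
    exact (QuotientAddGroup.eq_zero_iff _).mp this
  have hcompl : IsCompl F D := by
    constructor
    · rw [AddSubgroup.disjoint_def]
      intro a ha ha'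
      exact hFmem0 a ha ha'
    · rw [codisjoint_iff_le_sup]
      intro a _
      obtain ⟨x, hx⟩ := hsup a
      exact AddSubgroup.mem_sup.mpr ⟨φ x, ⟨x, rfl⟩, a - φ x, hx, by abel⟩
  -- the isomorphism F ≃+ A/D
  let ψ : F →+ A ⧸ D := π.comp F.subtype
  have hψinj : Function.Injective ψ := by
    rw [injective_iff_map_eq_zero]
    rintro ⟨a, ha⟩ h
    have hmem : a ∈ D := (QuotientAddGroup.eq_zero_iff _).mp h
    exact Subtype.ext (hFmem0 a ha hmem)
  have hψsurj : Function.Surjective ψ := by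
    intro y
    refine ⟨⟨φ (Q y), ⟨_, rfl⟩⟩, ?_⟩
    show π (φ (Q y)) = y
    rw [hπφ, AddEquiv.symm_apply_apply]
  let e : F ≃+ A ⧸ D := AddEquiv.ofBijective ψ ⟨hψinj, hψsurj⟩
  have hfinF : Finite F := Finite.of_equiv _ e.symm.toEquiv
  have hcardF : Nat.card F = Nat.card (A ⧸ D) := Nat.card_congr e.toEquiv
  have hcardle : Nat.card F ≤ M := by
    rw [hcardF]
    exact (hbd n₀ hn₀pos hn₀cop).2
  -- coprimality of |F| with p
  have hcop : (Nat.card F).Coprime p := by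
    rw [Nat.coprime_comm, hp.coprime_iff_not_dvd]
    intro hdvd
    haveI : Fintype (A ⧸ D) := Fintype.ofFinite _
    haveI : Fact p.Prime := ⟨hp⟩
    rw [hcardF, Nat.card_eq_fintype_card] at hdvd
    obtain ⟨x, hx⟩ := exists_prime_addOrderOf_dvd_card p hdvd
    have h1 : addOrderOf x ∣ n₀ := addOrderOf_dvd_of_nsmul_eq_zero (hkill x)
    rw [hx] at h1
    have : p ∣ Nat.gcd n₀ p := Nat.dvd_gcd h1 dvd_rfl
    rw [hn₀cop] at this
    exact hp.one_lt.ne' (Nat.dvd_one.mp this)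
  refine ⟨F, D, hcompl, hfinF, hcop, hcardle, hdiv, ?_⟩
  -- the final isomorphism for n with exponent F ∣ n
  intro n hn hcn hexp
  have hrange : (nMul A n).range = D := by
    apply le_antisymm
    · rintro _ ⟨a, rfl⟩
      obtain ⟨y, hy, z, hz, hyz⟩ := AddSubgroup.mem_sup.mp
        (hcompl.sup_eq_top ▸ AddSubgroup.mem_top a)
      have hny : n • y = 0 := by
        have h0 : n • (⟨y, hy⟩ : F) = 0 :=
          (AddMonoid.exponent_dvd_iff_forall_nsmul_eq_zero.mp hexp) ⟨y, hy⟩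
        exact congrArg Subtype.val h0
      show n • a ∈ D
      rw [← hyz, smul_add, hny, zero_add]
      exact AddSubgroup.nsmul_mem D hz n
    · rintro _ ⟨a, rfl⟩
      have hmem : n₀ • a ∈ (nMul A (n * n₀)).range := by
        rw [key n hn hcn]
        exact ⟨a, rfl⟩
      obtain ⟨b, hb⟩ := hmem
      refine ⟨n₀ • b, ?_⟩
      rw [nMul_apply] at hb ⊢
      rw [← mul_smul, hb]
      rfl
  exact ⟨(QuotientAddGroup.quotientAddEquivOfEq hrange).trans e.symm⟩
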